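/- If D' is an open Euclidean disk contained in the open unit disk D that is internally tangent to the boundary ∂D, then the hyperbolic area of D' is infinite. -/

import Mathlib

open MeasureTheory

/-- The hyperbolic area of a measurable subset of the open unit disk,
in the Poincaré disk model. -/
noncomputable def areaH (A : Set (EuclideanSpace ℝ (Fin 2))) : ENNReal :=
  ∫⁻ x in A, ENNReal.ofReal (4 / (1 - ‖x‖ ^ 2) ^ 2) ∂volume

open Set

def hypBox (t w : ℝ) : Set (EuclideanSpace ℝ (Fin 2)) :=
  {x | x 0 ∈ Ioo (1 - 2*t) (1 - t) ∧ x 1 ∈ Ioo (-w) w}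

lemma hypBox_subset {ρ t w : ℝ} (hρ0 : 0 < ρ) (ht0 : 0 < t) (h2t : 2*t ≤ ρ)
    (hw2 : w^2 ≤ ρ * t) :
    hypBox t w ⊆ Metric.ball (EuclideanSpace.single (0 : Fin 2) (1 - ρ)) ρ := by
  rintro x ⟨⟨hu1, hu2⟩, hv1, hv2⟩
  rw [Metric.mem_ball, EuclideanSpace.dist_eq, Real.sqrt_lt' hρ0, Fin.sum_univ_two]
  have h0 : EuclideanSpace.single (0 : Fin 2) (1 - ρ) 0 = 1 - ρ := by
    simp [EuclideanSpace.single_apply]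
  have h1 : EuclideanSpace.single (0 : Fin 2) (1 - ρ) 1 = 0 := by
    simp [EuclideanSpace.single_apply]
  rw [h0, h1, Real.dist_eq, Real.dist_eq, sq_abs, sq_abs]
  have hx1 : x 1 ^ 2 < ρ * t := by nlinarith
  nlinarith

lemma hypBox_volume {t w : ℝ} :
    volume (hypBox t w) = ENNReal.ofReal t * ENNReal.ofReal (2 * w) := by
  have hQeq : hypBox t w = ⇑(MeasurableEquiv.toLp 2 (Fin 2 → ℝ)).symm ⁻¹'
      (univ.pi fun i : Fin 2 => if i = 0 then Ioo (1 - 2*t) (1-t) else Ioo (-w) w) := by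
    ext x
    simp only [hypBox, mem_preimage, mem_pi, mem_univ, forall_true_left, Fin.forall_fin_two,
      mem_setOf_eq, MeasurableEquiv.coe_toLp_symm]
    norm_num
  rw [hQeq, (EuclideanSpace.volume_preserving_symm_measurableEquiv_toLp (Fin 2)).measure_preimage
    ((MeasurableSet.univ_pi fun i => by
      split <;> exact measurableSet_Ioo).nullMeasurableSet),
    volume_pi_pi, Fin.prod_univ_two]
  norm_num [Real.volume_Ioo]
  congr 1 <;> ring_nf
  rw [ENNReal.ofReal_mul' (by norm_num), ENNReal.ofReal_ofNat]

lemma hypBox_bound {ρ t w : ℝ} (hρ0 : 0 < ρ) (hρ1 : ρ < 1) (ht0 : 0 < t) (h2t : 2*t ≤ ρ)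
    (hw2 : w^2 ≤ ρ * t) {x : EuclideanSpace ℝ (Fin 2)} (hx : x ∈ hypBox t w) :
    ENNReal.ofReal (1 / (4 * t^2)) ≤ ENNReal.ofReal (4 / (1 - ‖x‖^2)^2) := by
  obtain ⟨⟨hu1, hu2⟩, hv1, hv2⟩ := hx
  apply ENNReal.ofReal_le_ofReal
  have hn : ‖x‖^2 = x 0 ^2 + x 1 ^2 := by
    rw [EuclideanSpace.norm_eq, Real.sq_sqrt (by positivity), Fin.sum_univ_two,
      Real.norm_eq_abs, Real.norm_eq_abs, sq_abs, sq_abs]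
  have hx1 : x 1 ^ 2 < ρ * t := by nlinarith
  have hz0 : 0 < 1 - ‖x‖^2 := by rw [hn]; nlinarith
  have hz4t : 1 - ‖x‖^2 ≤ 4 * t := by rw [hn]; nlinarith
  rw [div_le_div_iff₀ (by positivity) (by positivity)]
  nlinarith

lemma areaH_box_le {ρ t w : ℝ} (hρ0 : 0 < ρ) (hρ1 : ρ < 1) (ht0 : 0 < t) (h2t : 2*t ≤ ρ)
    (hw0 : 0 < w) (hw2 : w^2 ≤ ρ * t) :
    ENNReal.ofReal (w / (2 * t)) ≤
      areaH (Metric.ball (EuclideanSpace.single (0 : Fin 2) (1 - ρ)) ρ) :=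
  calc ENNReal.ofReal (w / (2 * t))
      = ENNReal.ofReal (1/(4*t^2)) * (ENNReal.ofReal t * ENNReal.ofReal (2*w)) := by
        rw [← ENNReal.ofReal_mul (by positivity), ← ENNReal.ofReal_mul (by positivity)]
        congr 1
        field_simp
        ring
    _ = ENNReal.ofReal (1/(4*t^2)) * volume (hypBox t w) := by rw [hypBox_volume]
    _ = ∫⁻ _ in hypBox t w, ENNReal.ofReal (1/(4*t^2)) ∂volume := (setLIntegral_const _ _).symm
    _ ≤ ∫⁻ x in hypBox t w, ENNReal.ofReal (4 / (1 - ‖x‖^2)^2) ∂volume :=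
        setLIntegral_mono (by measurability) fun x hx => hypBox_bound hρ0 hρ1 ht0 h2t hw2 hx
    _ ≤ areaH (Metric.ball (EuclideanSpace.single (0 : Fin 2) (1 - ρ)) ρ) :=
        lintegral_mono_set (hypBox_subset hρ0 ht0 h2t hw2)

lemma areaH_single_ball {ρ : ℝ} (hρ0 : 0 < ρ) (hρ1 : ρ < 1) :
    areaH (Metric.ball (EuclideanSpace.single (0 : Fin 2) (1 - ρ)) ρ) = ⊤ := by
  have key : ∀ m : ℕ, 1 ≤ m →
      ENNReal.ofReal (m / 2) ≤ areaH (Metric.ball (EuclideanSpace.single (0 : Fin 2) (1 - ρ)) ρ) := by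
    intro m hm
    have hm1 : (1:ℝ) ≤ m := by exact_mod_cast hm
    have hmpos : (0:ℝ) < m := by linarith
    have hkey := areaH_box_le (t := ρ / (2 * m ^ 2)) (w := ρ / (2 * m)) hρ0 hρ1
      (by positivity)
      (by
        have h : (1:ℝ) ≤ (m:ℝ) ^ 2 := by nlinarith
        have he : 2 * (ρ / (2 * (m:ℝ) ^ 2)) = ρ / (m:ℝ) ^ 2 := by field_simp
        rw [he]; exact div_le_self hρ0.le h)
      (by positivity)
      (by
        have h1 : (ρ / (2 * (m:ℝ))) ^ 2 = ρ ^ 2 / (4 * (m:ℝ) ^ 2) := by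
          field_simp; ring
        have h2 : ρ * (ρ / (2 * (m:ℝ) ^ 2)) = ρ ^ 2 / (2 * (m:ℝ) ^ 2) := by
          field_simp
        rw [h1, h2]
        gcongr
        nlinarith)
    have he : ρ / (2 * (m:ℝ)) / (2 * (ρ / (2 * (m:ℝ) ^ 2))) = m / 2 := by
      field_simp
    rwa [he] at hkey
  by_contra h
  have h1 := key (⌈2 * (areaH (Metric.ball (EuclideanSpace.single (0 : Fin 2) (1 - ρ)) ρ)).toReal⌉₊ + 1)
    (Nat.le_add_left 1 _)
  rw [ENNReal.ofReal_le_iff_le_toReal h] at h1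
  have h2 : 2 * (areaH (Metric.ball (EuclideanSpace.single (0 : Fin 2) (1 - ρ)) ρ)).toReal ≤
      ⌈2 * (areaH (Metric.ball (EuclideanSpace.single (0 : Fin 2) (1 - ρ)) ρ)).toReal⌉₊ :=
    Nat.le_ceil _
  push_cast at h1
  linarith

/-- An open Euclidean disk inside the unit disk that is internally tangent to the
unit circle has infinite hyperbolic area. -/
theorem stmt2 (c : EuclideanSpace ℝ (Fin 2)) (ρ : ℝ) (hρ : 0 < ρ)
    (hsub : Metric.ball c ρ ⊆ Metric.ball (0 : EuclideanSpace ℝ (Fin 2)) 1)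
    (htang : ∃! p : EuclideanSpace ℝ (Fin 2),
      p ∈ closure (Metric.ball c ρ) ∧ ‖p‖ = 1) :
    areaH (Metric.ball c ρ) = ⊤ := by
  obtain ⟨p, ⟨hpcl, hpn⟩, huniq⟩ := htang
  rw [closure_ball c hρ.ne'] at hpcl
  -- Step 1 : ‖c‖ + ρ ≤ 1
  have hc1 : ‖c‖ + ρ ≤ 1 := by
    by_contra hlt
    push_neg at hlt
    obtain ⟨u, hun, hcu⟩ : ∃ u : EuclideanSpace ℝ (Fin 2), ‖u‖ = 1 ∧ c = ‖c‖ • u := by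
      by_cases hc0 : c = 0
      · exact ⟨p, hpn, by simp [hc0]⟩
      · refine ⟨‖c‖⁻¹ • c, ?_, ?_⟩
        · rw [norm_smul, norm_inv, norm_norm]
          exact inv_mul_cancel₀ (norm_ne_zero_iff.mpr hc0)
        · rw [smul_smul, mul_inv_cancel₀ (norm_ne_zero_iff.mpr hc0), one_smul]
    set ε : ℝ := min (ρ/2) ((‖c‖ + ρ - 1)/2) with hε
    have hε0 : 0 < ε := by
      apply lt_min (by linarith) (by linarith)
    have hερ : ε ≤ ρ/2 := min_le_left _ _
    have hε2 : ε ≤ (‖c‖ + ρ - 1)/2 := min_le_right _ _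
    have hx : (‖c‖ + (ρ - ε)) • u ∈ Metric.ball c ρ := by
      rw [Metric.mem_ball, dist_eq_norm]
      nth_rewrite 2 [hcu]
      rw [← sub_smul, add_sub_cancel_left, norm_smul, hun, mul_one, Real.norm_eq_abs,
        abs_of_nonneg (by linarith)]
      linarith
    have := hsub hx
    rw [Metric.mem_ball, dist_zero_right, norm_smul, hun, mul_one, Real.norm_eq_abs,
      abs_of_nonneg (by have := norm_nonneg c; linarith)] at this
    linarith
  -- Step 2: ‖p - c‖ = ρ and ‖c‖ = 1 - ρ
  have hpc : ‖p - c‖ ≤ ρ := by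
    rw [Metric.mem_closedBall, dist_eq_norm] at hpcl
    exact hpcl
  have htri : 1 ≤ ‖c‖ + ‖p - c‖ := by
    have h := norm_add_le c (p - c)
    rw [add_sub_cancel, hpn] at h
    exact h
  have hpcρ : ‖p - c‖ = ρ := le_antisymm hpc (by linarith)
  have hcρ : ‖c‖ = 1 - ρ := by linarith
  -- Step 3: rule out c = 0
  have hcz : c ≠ 0 := by
    intro hc0
    have hρ1 : ρ = 1 := by
      rw [hc0, norm_zero] at hcρ; linarith
    have hmem : -p ∈ closure (Metric.ball c ρ) ∧ ‖-p‖ = 1 := by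
      rw [closure_ball c hρ.ne', hc0, hρ1]
      constructor
      · rw [Metric.mem_closedBall, dist_zero_right, norm_neg, hpn]
      · rw [norm_neg, hpn]
    have heq : -p = p := huniq (-p) hmem
    have : p = 0 := by
      have h2 : p + p = 0 := by nth_rewrite 1 [← heq]; exact neg_add_cancel p
      have h3 : (2:ℝ) • p = 0 := by rw [two_smul]; exact h2
      exact (smul_eq_zero.mp h3).resolve_left (by norm_num)
    rw [this, norm_zero] at hpn
    norm_num at hpn
  have hρ1 : ρ < 1 := by
    have := norm_pos_iff.mpr hcz
    linarith [hcρ ▸ this]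
  -- Step 4: c = (1 - ρ) • p
  have hsr : SameRay ℝ c (p - c) := by
    rw [sameRay_iff_norm_add, add_sub_cancel, hpn, hcρ, hpcρ]; ring
  obtain ⟨r, hr0, hrc⟩ := hsr.exists_nonneg_left hcz
  have hp_eq : p = (1 + r) • c := by
    have : c + r • c = p := by rw [hrc]; abel
    rw [← this, add_smul, one_smul]
  have h1r : (1 + r) * (1 - ρ) = 1 := by
    have h := hpn
    rw [hp_eq, norm_smul, Real.norm_eq_abs, abs_of_nonneg (by linarith), hcρ] at h
    linarith
  have hcp : c = (1 - ρ) • p := by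
    rw [hp_eq, smul_smul, show (1 - ρ) * (1 + r) = 1 from by rw [mul_comm]; exact h1r, one_smul]
  -- Step 5: orthonormal basis with b 0 = p
  have hON : Orthonormal ℝ (({0} : Set (Fin 2)).restrict ![p, 0]) := by
    rw [orthonormal_iff_ite]
    rintro ⟨i, hi⟩ ⟨j, hj⟩
    simp only [Set.mem_singleton_iff] at hi hj
    subst hi; subst hj
    simp only [Set.restrict_apply, Matrix.cons_val_zero]
    rw [if_true, real_inner_self_eq_norm_sq,
      show ({0} : Set (Fin 2)).restrict ![p, 0] ⟨0, hi⟩ = p from rfl, hpn]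
    norm_num
  obtain ⟨b, hb⟩ := hON.exists_orthonormalBasis_extension_of_card_eq (by simp) 
  have hb0 : b 0 = p := hb 0 rfl
  -- Step 6: transport via the measure-preserving isometry b.repr.symm
  have hmp := b.measurePreserving_repr_symm
  have hemb : MeasurableEmbedding ⇑b.repr.symm :=
    b.repr.symm.toHomeomorph.toMeasurableEquiv.measurableEmbedding
  have hreprc : b.repr c = EuclideanSpace.single (0 : Fin 2) (1 - ρ) := by
    rw [hcp, LinearIsometryEquiv.map_smul, ← hb0, b.repr_self]
    ext j
    simp [EuclideanSpace.single_apply]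
  have hpre : ⇑b.repr.symm ⁻¹' (Metric.ball c ρ) =
      Metric.ball (EuclideanSpace.single (0 : Fin 2) (1 - ρ)) ρ := by
    have : c = b.repr.symm (EuclideanSpace.single (0 : Fin 2) (1 - ρ)) := by
      rw [← hreprc]; simp
    rw [this, b.repr.symm.isometry.preimage_ball]
  have htrans := hmp.setLIntegral_comp_preimage_emb hemb
    (fun x => ENNReal.ofReal (4 / (1 - ‖x‖ ^ 2) ^ 2)) (Metric.ball c ρ)
  unfold areaH
  rw [← htrans, hpre]
  simp only [LinearIsometryEquiv.norm_map]
  exact areaH_single_ball hρ hρ1
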